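/- For every fixed ζ ∈ [−1.5, −1.25], the function s ↦ L(ζ,s) = s − ζ − ln(1 + s − ζ) + 2(ζ + 1/2)²(s − ζ)² / ((2ζ + 1)ζ² + (2/3)ζ(s − ζ)) is strictly decreasing on the interval [−1, 0]; equivalently, ∂L(ζ,s)/∂s < 0 for all s ∈ [−1, 0] and ζ ∈ [−1.5, −1.25]. -/

import Mathlib

open Real Set

/-- The auxiliary function `L(ζ, s)` from Lemma 2.4 of the paper. -/
noncomputable def Lfun (ζ s : ℝ) : ℝ :=
  s - ζ - Real.log (1 + s - ζ) +
    2 * (ζ + 1 / 2) ^ 2 * (s - ζ) ^ 2 /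
      ((2 * ζ + 1) * ζ ^ 2 + (2 / 3) * ζ * (s - ζ))

lemma Lfun_key (ζ s : ℝ) (h1 : -1.5 ≤ ζ) (h2 : ζ ≤ -1.25) (h3 : -1 ≤ s) (h4 : s ≤ 0) :
    (s-ζ) * ((2*ζ+1)*ζ^2 + (2/3)*ζ*(s-ζ))^2 +
    (1+s-ζ) * (4*(ζ+1/2)^2*(s-ζ)*((2*ζ+1)*ζ^2 + (2/3)*ζ*(s-ζ))
       - 2*(ζ+1/2)^2*(s-ζ)^2*((2/3)*ζ)) < 0 := by
  have hx : (0:ℝ) ≤ -ζ - 5/4 := by linarith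
  have ht : (0:ℝ) ≤ s + 1 := by linarith
  nlinarith [mul_nonneg (pow_nonneg hx 0) (pow_nonneg ht 1),
    mul_nonneg (pow_nonneg hx 0) (pow_nonneg ht 2),
    mul_nonneg (pow_nonneg hx 0) (pow_nonneg ht 3),
    mul_nonneg (pow_nonneg hx 1) (pow_nonneg ht 0),
    mul_nonneg (pow_nonneg hx 1) (pow_nonneg ht 1),
    mul_nonneg (pow_nonneg hx 1) (pow_nonneg ht 2),
    mul_nonneg (pow_nonneg hx 1) (pow_nonneg ht 3),
    mul_nonneg (pow_nonneg hx 2) (pow_nonneg ht 0),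
    mul_nonneg (pow_nonneg hx 2) (pow_nonneg ht 1),
    mul_nonneg (pow_nonneg hx 2) (pow_nonneg ht 2),
    mul_nonneg (pow_nonneg hx 2) (pow_nonneg ht 3),
    mul_nonneg (pow_nonneg hx 3) (pow_nonneg ht 0),
    mul_nonneg (pow_nonneg hx 3) (pow_nonneg ht 1),
    mul_nonneg (pow_nonneg hx 3) (pow_nonneg ht 2),
    mul_nonneg (pow_nonneg hx 3) (pow_nonneg ht 3),
    mul_nonneg (pow_nonneg hx 4) (pow_nonneg ht 0),
    mul_nonneg (pow_nonneg hx 4) (pow_nonneg ht 1),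
    mul_nonneg (pow_nonneg hx 4) (pow_nonneg ht 2),
    mul_nonneg (pow_nonneg hx 5) (pow_nonneg ht 0),
    mul_nonneg (pow_nonneg hx 5) (pow_nonneg ht 1),
    mul_nonneg (pow_nonneg hx 5) (pow_nonneg ht 2),
    mul_nonneg (pow_nonneg hx 6) (pow_nonneg ht 0),
    mul_nonneg (pow_nonneg hx 6) (pow_nonneg ht 1),
    mul_nonneg (pow_nonneg hx 7) (pow_nonneg ht 0)]

lemma Lfun_D_neg (ζ s : ℝ) (h1 : -1.5 ≤ ζ) (h2 : ζ ≤ -1.25) (h3 : -1 ≤ s) :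
    (2*ζ+1)*ζ^2 + (2/3)*ζ*(s-ζ) < 0 := by
  nlinarith [sq_nonneg (ζ + 5/4), mul_pos (by linarith : (0:ℝ) < -ζ) (by linarith : (0:ℝ) < s - ζ)]

lemma Lfun_hasDerivAt (ζ s : ℝ) (h1 : -1.5 ≤ ζ) (h2 : ζ ≤ -1.25) (h3 : -1 ≤ s) :
    HasDerivAt (fun s => Lfun ζ s)
      (1 - 1/(1+s-ζ) +
        (4*(ζ+1/2)^2*(s-ζ)*((2*ζ+1)*ζ^2 + (2/3)*ζ*(s-ζ))
          - 2*(ζ+1/2)^2*(s-ζ)^2*((2/3)*ζ)) / ((2*ζ+1)*ζ^2 + (2/3)*ζ*(s-ζ))^2) s := by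
  have hD : (2*ζ+1)*ζ^2 + (2/3)*ζ*(s-ζ) ≠ 0 := (Lfun_D_neg ζ s h1 h2 h3).ne
  have hlog : (0:ℝ) < 1 + s - ζ := by linarith
  have h0 : HasDerivAt (fun x : ℝ => 1 + x - ζ) 1 s := by
    simpa using ((hasDerivAt_id s).const_add 1).sub_const ζ
  have hl : HasDerivAt (fun x : ℝ => Real.log (1 + x - ζ)) (1/(1+s-ζ)) s := by
    simpa using h0.log hlog.ne'
  have hu : HasDerivAt (fun x : ℝ => x - ζ) 1 s := (hasDerivAt_id s).sub_const ζ
  have hN : HasDerivAt (fun x : ℝ => 2*(ζ+1/2)^2*(x-ζ)^2) (2*(ζ+1/2)^2*(2*(s-ζ))) s := by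
    have := (hu.pow 2).const_mul (2*(ζ+1/2)^2)
    simpa using this
  have hDd : HasDerivAt (fun x : ℝ => (2*ζ+1)*ζ^2 + (2/3)*ζ*(x-ζ)) ((2/3)*ζ) s := by
    simpa using (hu.const_mul ((2/3)*ζ)).const_add ((2*ζ+1)*ζ^2)
  have hdiv := hN.div hDd hD
  have hfull := (((hasDerivAt_id s).sub_const ζ).sub hl).add hdiv
  refine hfull.congr_deriv ?_
  ring

/-- For each fixed `ζ ∈ [-1.5, -1.25]`, the map `s ↦ L(ζ, s)` is strictly
decreasing on `[-1, 0]`; equivalently its derivative in `s` is negative there. -/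
theorem Lfun_strictAnti_in_s
    (ζ : ℝ) (hζ : ζ ∈ Set.Icc (-1.5 : ℝ) (-1.25)) :
    StrictAntiOn (fun s => Lfun ζ s) (Set.Icc (-1 : ℝ) 0) ∧
    ∀ s ∈ Set.Icc (-1 : ℝ) 0, deriv (fun s => Lfun ζ s) s < 0 := by
  obtain ⟨h1, h2⟩ := hζ
  have hneg : ∀ s ∈ Set.Icc (-1 : ℝ) 0, deriv (fun s => Lfun ζ s) s < 0 := by
    intro s hs
    obtain ⟨h3, h4⟩ := hs
    rw [(Lfun_hasDerivAt ζ s h1 h2 h3).deriv]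
    have hD : (2*ζ+1)*ζ^2 + (2/3)*ζ*(s-ζ) < 0 := Lfun_D_neg ζ s h1 h2 h3
    have hlog : (0:ℝ) < 1 + s - ζ := by linarith
    have hDne : (2*ζ+1)*ζ^2 + (2/3)*ζ*(s-ζ) ≠ 0 := hD.ne
    have hlne : (1 + s - ζ) ≠ 0 := hlog.ne'
    have hD2 : (0:ℝ) < ((2*ζ+1)*ζ^2 + (2/3)*ζ*(s-ζ))^2 := by positivity
    have h1u : 1 - 1/(1+s-ζ) = (s-ζ)/(1+s-ζ) := by
      field_simp
      ring
    rw [h1u, div_add_div _ _ hlne hD2.ne']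
    exact div_neg_of_neg_of_pos (Lfun_key ζ s h1 h2 h3 h4) (mul_pos hlog hD2)
  refine ⟨?_, hneg⟩
  apply strictAntiOn_of_deriv_neg (convex_Icc _ _)
  · exact fun s hs => ((Lfun_hasDerivAt ζ s h1 h2 hs.1).differentiableAt).continuousAt.continuousWithinAt
  · intro s hs
    rw [interior_Icc] at hs
    exact hneg s ⟨hs.1.le, hs.2.le⟩
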